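/- arXiv:1901.10893 — 2 statements merged into one kernel-verified Lean document; each statement's English description precedes it below -/
import Mathlib

section
/- Let M be an n × n real symmetric positive semidefinite matrix and let Q₁ be an n × m matrix with orthonormal columns. Then (det(Q₁ᵀ M Q₁))² ≤ det(Q₁ᵀ M² Q₁). -/
open Matrix Finset

lemma psd_det_nonneg {m : ℕ} {A : Matrix (Fin m) (Fin m) ℝ} (hA : A.PosSemidef) :
    0 ≤ A.det := by
  rw [hA.1.det_eq_prod_eigenvalues]
  exact Finset.prod_nonneg fun i _ => hA.eigenvalues_nonneg i

/-- If N - 1 is PSD (N symmetric), then det N ≥ 1. -/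
lemma one_le_det_of_one_le {m : ℕ} {N : Matrix (Fin m) (Fin m) ℝ}
    (hN : N.IsHermitian) (h : (N - 1).PosSemidef) : 1 ≤ N.det := by
  rw [hN.det_eq_prod_eigenvalues]
  have key : ∀ i : Fin m, 1 ≤ hN.eigenvalues i := by
    intro i
    have hv := hN.mulVec_eigenvectorBasis i
    set v : Fin m → ℝ := ⇑(hN.eigenvectorBasis i) with hvdef
    have hnorm : v ⬝ᵥ v = 1 := by
      have h1 := hN.eigenvectorBasis.orthonormal.1 i
      have h3 : (inner ℝ (hN.eigenvectorBasis i) (hN.eigenvectorBasis i) : ℝ) = 1 := by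
        rw [real_inner_self_eq_norm_sq, h1]; norm_num
      rw [← h3, EuclideanSpace.inner_eq_star_dotProduct]
      rfl
    have h2 := h.dotProduct_mulVec_nonneg v
    rw [sub_mulVec, hv, one_mulVec] at h2
    have h4 : star v ⬝ᵥ (hN.eigenvalues i • v - v) = hN.eigenvalues i - 1 := by
      rw [dotProduct_sub, dotProduct_smul]
      simp only [star_trivial, hnorm, smul_eq_mul, mul_one]
    rw [h4] at h2
    linarith
  calc (1:ℝ) = ∏ _i : Fin m, 1 := by simp
    _ ≤ ∏ i : Fin m, (hN.eigenvalues i : ℝ) :=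
      Finset.prod_le_prod (fun i _ => zero_le_one) (fun i _ => key i)

/-- For a symmetric positive semidefinite M and Q₁ with orthonormal
columns, (det(Q₁ᵀ M Q₁))² ≤ det(Q₁ᵀ M² Q₁). -/
theorem det_compression_sq_le {m n : ℕ}
    (M : Matrix (Fin n) (Fin n) ℝ) (hM : M.PosSemidef)
    (Q₁ : Matrix (Fin n) (Fin m) ℝ) (hQ : Q₁ᵀ * Q₁ = 1) :
    ((Q₁ᵀ * M * Q₁).det) ^ 2 ≤ (Q₁ᵀ * M ^ 2 * Q₁).det := by
  have hMH : Mᵀ = M := hM.1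
  set A := Q₁ᵀ * M * Q₁ with hAdef
  set B := Q₁ᵀ * M ^ 2 * Q₁ with hBdef
  have hA : A.PosSemidef := by
    have := hM.conjTranspose_mul_mul_same Q₁
    rwa [conjTranspose_eq_transpose_of_trivial] at this
  have hB : B.PosSemidef := by
    have := (hM.pow 2).conjTranspose_mul_mul_same Q₁
    rwa [conjTranspose_eq_transpose_of_trivial] at this
  -- the projection P = 1 - Q₁Q₁ᵀ is PSD
  have hP : (1 - Q₁ * Q₁ᵀ).PosSemidef := by
    have hsym : (1 - Q₁ * Q₁ᵀ)ᴴ = 1 - Q₁ * Q₁ᵀ := by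
      simp [conjTranspose_eq_transpose_of_trivial, transpose_sub, transpose_mul]
    have hQQ : Q₁ * Q₁ᵀ * (Q₁ * Q₁ᵀ) = Q₁ * Q₁ᵀ := by
      calc Q₁ * Q₁ᵀ * (Q₁ * Q₁ᵀ) = Q₁ * (Q₁ᵀ * Q₁) * Q₁ᵀ := by
            simp only [Matrix.mul_assoc]
        _ = Q₁ * Q₁ᵀ := by rw [hQ, Matrix.mul_one]
    have hidem : (1 - Q₁ * Q₁ᵀ) * (1 - Q₁ * Q₁ᵀ) = 1 - Q₁ * Q₁ᵀ := by
      simp only [sub_mul, mul_sub, one_mul, mul_one, hQQ]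
      abel
    have := posSemidef_conjTranspose_mul_self (1 - Q₁ * Q₁ᵀ)
    rwa [hsym, hidem] at this
  -- B - A² is PSD
  have hdiff : (B - A ^ 2).PosSemidef := by
    have h1 := hP.conjTranspose_mul_mul_same (M * Q₁)
    have h2 : (M * Q₁)ᴴ * (1 - Q₁ * Q₁ᵀ) * (M * Q₁) = B - A ^ 2 := by
      rw [conjTranspose_eq_transpose_of_trivial, transpose_mul, hMH]
      rw [hAdef, hBdef]
      simp only [pow_two]
      rw [Matrix.mul_sub, Matrix.sub_mul, Matrix.mul_one]
      congr 1
      · simp only [Matrix.mul_assoc]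
      · simp only [Matrix.mul_assoc]
    rwa [h2] at h1
  by_cases hdet : A.det = 0
  · rw [hdet]
    simpa using psd_det_nonneg hB
  · -- A is invertible
    have hAunit : IsUnit A.det := isUnit_iff_ne_zero.mpr hdet
    have hAinv : A⁻¹ᵀ = A⁻¹ := by
      rw [transpose_nonsing_inv]
      congr 1
      rw [← conjTranspose_eq_transpose_of_trivial]
      exact hA.1
    set N := A⁻¹ * B * A⁻¹ with hNdef
    have hNsub : N - 1 = A⁻¹ᴴ * (B - A ^ 2) * A⁻¹ := by
      rw [conjTranspose_eq_transpose_of_trivial, hAinv]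
      rw [mul_sub, sub_mul, hNdef]
      congr 1
      rw [pow_two, show A⁻¹ * (A * A) * A⁻¹ = (A⁻¹ * A) * (A * A⁻¹) by noncomm_ring,
        nonsing_inv_mul A hAunit, mul_nonsing_inv A hAunit, one_mul]
    have hNpsd : (N - 1).PosSemidef := by
      rw [hNsub]; exact hdiff.conjTranspose_mul_mul_same A⁻¹
    have hNherm : N.IsHermitian := by
      have h1 : (N - 1)ᴴ = N - 1 := hNpsd.1
      rw [conjTranspose_sub, conjTranspose_one] at h1
      have h2 := congrArg (· + (1 : Matrix (Fin m) (Fin m) ℝ)) h1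
      simpa [IsSymm] using h2
    have hdetN : 1 ≤ N.det := one_le_det_of_one_le hNherm hNpsd
    have hBdet : B.det = A.det ^ 2 * N.det := by
      have hBN : B = A * N * A := by
        rw [hNdef, show A * (A⁻¹ * B * A⁻¹) * A = (A * A⁻¹) * B * (A⁻¹ * A) by noncomm_ring,
          mul_nonsing_inv A hAunit, nonsing_inv_mul A hAunit, one_mul, mul_one]
      rw [hBN, det_mul, det_mul]; ring
    rw [hBdet]
    nlinarith [sq_nonneg A.det, psd_det_nonneg hA]
end

section
/- Let (c₁,…,c_k), (d₁,…,d_m) be nonnegative reals, rᵢ, nⱼ positive integers with Σᵢ rᵢ = n, and Aⱼ : ℝ^n → ℝ^{nⱼ} surjective linear maps. Define M_g as the supremum over positive definite Bᵢ ∈ S⁺(ℝ^{rᵢ}) of ½ Σᵢ cᵢ log det Bᵢ − ½ Σⱼ dⱼ log det(Aⱼ B Aⱼᵀ), where B = diag(B₁,…,B_k). If M_g < ∞, then Σᵢ cᵢ rᵢ = Σⱼ dⱼ nⱼ. -/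
open Matrix Real

lemma aux_log_bound {S C' : ℝ} (h : ∀ t : ℝ, 0 < t → S * Real.log t ≤ C') : S = 0 := by
  by_contra hS
  have h1 := h (Real.exp ((C' + 1) / S)) (Real.exp_pos _)
  rw [Real.log_exp] at h1
  have : S * ((C' + 1) / S) = C' + 1 := by field_simp
  linarith

lemma aux_posdef_AAT {n : Type*} {p : Type*} [Fintype n] [Fintype p] [DecidableEq n]
    (A : Matrix n p ℝ) (hA : Function.Surjective A.mulVec) : (A * Aᵀ).PosDef := by
  obtain ⟨B, hB⟩ := Matrix.mulVec_surjective_iff_exists_right_inverse.mp hA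
  have hinj : ∀ x : n → ℝ, Aᵀ *ᵥ x = 0 → x = 0 := by
    intro x hx
    have : Bᵀ *ᵥ (Aᵀ *ᵥ x) = x := by
      rw [Matrix.mulVec_mulVec, ← Matrix.transpose_mul, hB, Matrix.transpose_one,
        Matrix.one_mulVec]
    rw [hx, Matrix.mulVec_zero] at this
    exact this.symm
  refine Matrix.PosDef.of_dotProduct_mulVec_pos ?_ ?_
  · have := Matrix.isHermitian_mul_conjTranspose_self A
    simpa [Matrix.conjTranspose_eq_transpose_of_trivial] using this
  · intro x hx
    have hy : Aᵀ *ᵥ x ≠ 0 := fun h => hx (hinj x h)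
    have hrw : star x ⬝ᵥ (A * Aᵀ) *ᵥ x = (Aᵀ *ᵥ x) ⬝ᵥ (Aᵀ *ᵥ x) := by
      rw [← Matrix.mulVec_mulVec, Matrix.dotProduct_mulVec, star_trivial]
      congr 1
      ext i
      simp [Matrix.vecMul, Matrix.mulVec, dotProduct, Matrix.transpose_apply, mul_comm]
    rw [hrw]
    rcases lt_or_eq_of_le (Finset.sum_nonneg fun i _ => mul_self_nonneg ((Aᵀ *ᵥ x) i) :
        0 ≤ (Aᵀ *ᵥ x) ⬝ᵥ (Aᵀ *ᵥ x)) with h | h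
    · exact h
    · exact absurd (dotProduct_self_eq_zero.mp h.symm) hy

/-- If the Gaussian functional defining M_g is bounded above over all
block-diagonal positive definite matrices B = diag(B₁,…,B_k) (i.e. M_g < ∞), then
necessarily Σᵢ cᵢ rᵢ = Σⱼ dⱼ nⱼ. -/
theorem scaling_condition_of_Mg_finite {k m : ℕ}
    (c : Fin k → ℝ) (d : Fin m → ℝ) (hc : ∀ i, 0 ≤ c i) (hd : ∀ j, 0 ≤ d j)
    (r : Fin k → ℕ) (hr : ∀ i, 0 < r i) (nn : Fin m → ℕ) (hn : ∀ j, 0 < nn j)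
    (A : ∀ j : Fin m, Matrix (Fin (nn j)) ((i : Fin k) × Fin (r i)) ℝ)
    (hA : ∀ j, Function.Surjective (A j).mulVec)
    (hbdd : ∃ C : ℝ, ∀ B : (i : Fin k) → Matrix (Fin (r i)) (Fin (r i)) ℝ,
      (∀ i, (B i).PosDef) →
        (1 / 2) * ∑ i, c i * Real.log (B i).det -
          (1 / 2) * ∑ j, d j * Real.log (A j * Matrix.blockDiagonal' B * (A j)ᵀ).det ≤ C) :
    ∑ i, c i * (r i : ℝ) = ∑ j, d j * (nn j : ℝ) := by
  obtain ⟨C, hC⟩ := hbdd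
  have hG : ∀ j, (A j * (A j)ᵀ).PosDef := fun j => aux_posdef_AAT (A j) (hA j)
  set K := ∑ j, d j * Real.log (A j * (A j)ᵀ).det with hK
  have key : ∀ t : ℝ, 0 < t →
      ((∑ i, c i * (r i : ℝ)) - ∑ j, d j * (nn j : ℝ)) * Real.log t ≤ 2 * C + K := by
    intro t ht
    set B : (i : Fin k) → Matrix (Fin (r i)) (Fin (r i)) ℝ := fun i => t • 1 with hB
    have hBpd : ∀ i, (B i).PosDef := by
      intro i
      rw [hB]
      simp only [Matrix.smul_one_eq_diagonal]
      exact Matrix.PosDef.diagonal fun _ => ht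
    have hblk : Matrix.blockDiagonal' B = t • (1 : Matrix _ _ ℝ) := by
      rw [hB, show (fun i => t • (1 : Matrix (Fin (r i)) (Fin (r i)) ℝ)) =
        t • (fun i => (1 : Matrix (Fin (r i)) (Fin (r i)) ℝ)) from rfl,
        Matrix.blockDiagonal'_smul]
      congr 1
      exact Matrix.blockDiagonal'_one
    have hdet1 : ∀ i, Real.log (B i).det = (r i : ℝ) * Real.log t := by
      intro i
      rw [hB]
      simp only [Matrix.det_smul, Matrix.det_one, mul_one, Fintype.card_fin]
      rw [Real.log_pow]
    have hdet2 : ∀ j, Real.log (A j * Matrix.blockDiagonal' B * (A j)ᵀ).det =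
        (nn j : ℝ) * Real.log t + Real.log (A j * (A j)ᵀ).det := by
      intro j
      rw [hblk, Matrix.mul_smul, Matrix.smul_mul, Matrix.mul_one, Matrix.det_smul,
        Fintype.card_fin, Real.log_mul (pow_ne_zero _ ht.ne') (hG j).det_pos.ne',
        Real.log_pow]
    have h0 := hC B hBpd
    simp_rw [hdet1, hdet2] at h0
    have e1 : ∑ i, c i * ((r i : ℝ) * Real.log t) = (∑ i, c i * (r i : ℝ)) * Real.log t := by
      rw [Finset.sum_mul]; exact Finset.sum_congr rfl fun i _ => (mul_assoc _ _ _).symm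
    have e2 : ∑ j, d j * ((nn j : ℝ) * Real.log t + Real.log (A j * (A j)ᵀ).det) =
        (∑ j, d j * (nn j : ℝ)) * Real.log t + K := by
      rw [hK, Finset.sum_mul, ← Finset.sum_add_distrib]
      exact Finset.sum_congr rfl fun j _ => by ring
    rw [e1, e2] at h0
    nlinarith [h0]
  have hS := aux_log_bound (S := (∑ i, c i * (r i : ℝ)) - ∑ j, d j * (nn j : ℝ))
    (C' := 2 * C + K) key
  linarith
end
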